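/- If G is a finite simple graph with minimum degree δ(G) ≥ 1 and with no full edge, then EC(G) ≥ 1 + δ(G). -/

import Mathlib

open SimpleGraph

/-- Two edges (as unordered pairs of vertices) share an endpoint. -/
def SharesEndpoint {V : Type*} (e f : Sym2 V) : Prop := ∃ v, v ∈ e ∧ v ∈ f

/-- `D` is an edge dominating set of `G`: `D` consists of edges of `G` and every
edge of `G` outside `D` shares an endpoint with some edge of `D`. -/
def IsEdgeDominating {V : Type*} (G : SimpleGraph V) (D : Set (Sym2 V)) : Prop :=
  D ⊆ G.edgeSet ∧ ∀ e ∈ G.edgeSet \ D, ∃ f ∈ D, SharesEndpoint e f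

/-- Two disjoint edge sets form an edge coalition: neither is an edge dominating
set but their union is. -/
def IsEdgeCoalition {V : Type*} (G : SimpleGraph V) (E₁ E₂ : Set (Sym2 V)) : Prop :=
  Disjoint E₁ E₂ ∧ ¬ IsEdgeDominating G E₁ ∧ ¬ IsEdgeDominating G E₂ ∧
    IsEdgeDominating G (E₁ ∪ E₂)

/-- An ec-partition of `G`: a partition of the edge set of `G` (into nonempty,
pairwise disjoint parts) such that every part either is a singleton edge
dominating set, or is not an edge dominating set but forms an edge coalition
with another part. -/
def IsECPartition {V : Type*} (G : SimpleGraph V) (P : Set (Set (Sym2 V))) : Prop :=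
  (∀ A ∈ P, A.Nonempty) ∧
  P.Pairwise Disjoint ∧
  ⋃₀ P = G.edgeSet ∧
  ∀ A ∈ P, ((∃ e, A = {e}) ∧ IsEdgeDominating G A) ∨
    (¬ IsEdgeDominating G A ∧ ∃ B ∈ P, B ≠ A ∧ IsEdgeCoalition G A B)

/-- The edge coalition number `EC(G)`: the maximum number of parts over all
ec-partitions of `G`. -/
noncomputable def edgeCoalitionNumber {V : Type*} (G : SimpleGraph V) : ℕ :=
  sSup {k | ∃ P, IsECPartition G P ∧ P.ncard = k}

/-- If `G` is a finite simple graph with minimum degree `δ(G) ≥ 1` and no full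
edge, then `EC(G) ≥ 1 + δ(G)`. -/
theorem edgeCoalitionNumber_ge_minDegree {V : Type*} [Fintype V] (G : SimpleGraph V)
    [DecidableRel G.Adj] (hδ : 1 ≤ G.minDegree)
    (hfull : ¬ ∃ e ∈ G.edgeSet, ∀ f ∈ G.edgeSet, f ≠ e → SharesEndpoint e f) :
    1 + G.minDegree ≤ edgeCoalitionNumber G := by
  classical
  have hsymm : ∀ (e f : Sym2 V), SharesEndpoint e f → SharesEndpoint f e := by
    rintro e f ⟨w, h1, h2⟩; exact ⟨w, h2, h1⟩
  have hVne : Nonempty V := by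
    by_contra h
    rw [not_nonempty_iff] at h
    have : G.minDegree = 0 := by simp [SimpleGraph.minDegree, Finset.univ_eq_empty]
    omega
  obtain ⟨v, hv⟩ := G.exists_minimal_degree_vertex
  have hvdeg : 1 ≤ G.degree v := hv ▸ hδ
  obtain ⟨u₁, hu₁⟩ : ∃ u, G.Adj v u := by
    rw [← G.degree_pos_iff_exists_adj]; omega
  set e₁ : Sym2 V := s(v, u₁) with he₁def
  have he₁E : e₁ ∈ G.edgeSet := hu₁
  have hve₁ : v ∈ e₁ := Sym2.mem_mk_left _ _
  set Ev : Set (Sym2 V) := G.incidenceSet v with hEvdef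
  have he₁Ev : e₁ ∈ Ev := ⟨he₁E, hve₁⟩
  set R : Set (Sym2 V) := {e ∈ G.edgeSet | v ∉ e} with hRdef
  have hRE : R ⊆ G.edgeSet := fun e h => h.1
  set P₀ : Set (Sym2 V) := {g ∈ R | ¬ SharesEndpoint e₁ g} with hP₀def
  -- no singleton dominates
  have hsing : ∀ f ∈ G.edgeSet, ¬ IsEdgeDominating G {f} := by
    intro f hf hdom
    refine hfull ⟨f, hf, fun g hg hne => ?_⟩
    obtain ⟨h, hh, hsh⟩ := hdom.2 g ⟨hg, by simp [hne]⟩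
    rw [Set.mem_singleton_iff] at hh
    exact hsymm _ _ (hh ▸ hsh)
  -- R nonempty
  have hRne : R.Nonempty := by
    by_contra h
    rw [Set.not_nonempty_iff_eq_empty] at h
    refine hfull ⟨e₁, he₁E, fun f hf hne => ⟨v, hve₁, ?_⟩⟩
    by_contra hvf
    have : f ∈ R := ⟨hf, hvf⟩
    simp [h] at this
  have hP₀nd : ¬ IsEdgeDominating G P₀ := by
    rintro ⟨_, hdom⟩
    obtain ⟨f, hf, hsh⟩ := hdom e₁ ⟨he₁E, fun hmem => hmem.1.2 hve₁⟩
    exact hf.2 hsh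
  -- maximal non-dominating P with P₀ ⊆ P ⊆ R
  set S : Set (Set (Sym2 V)) := {X | X ⊆ R ∧ P₀ ⊆ X ∧ ¬ IsEdgeDominating G X} with hSdef
  have hP₀mem : P₀ ∈ S := ⟨fun g h => h.1, le_refl _, hP₀nd⟩
  obtain ⟨P, hPmem, hPmax'⟩ := (Set.toFinite S).exists_maximal ⟨P₀, hP₀mem⟩
  have hPmax : ∀ a' ∈ S, id P ≤ id a' → id P = id a' :=
    fun a' ha' hle => le_antisymm hle (hPmax' ha' hle)
  simp only [id] at hPmax
  obtain ⟨hPR, hP₀P, hPnd⟩ := hPmem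
  have hPE : P ⊆ G.edgeSet := fun e h => (hPR h).1
  have hins : ∀ g ∈ R, g ∉ P → IsEdgeDominating G (insert g P) := by
    intro g hg hgP
    by_contra hnd
    have hmem : insert g P ∈ S :=
      ⟨Set.insert_subset hg hPR, hP₀P.trans (Set.subset_insert _ _), hnd⟩
    have := hPmax _ hmem (Set.subset_insert _ _)
    exact hgP (this ▸ Set.mem_insert g P)
  have hPne : P.Nonempty := by
    rcases Set.eq_empty_or_nonempty P with h | h
    · obtain ⟨g, hg⟩ := hRne
      have hdom := hins g hg (by simp [h])
      rw [h] at hdom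
      have heq : insert g (∅ : Set (Sym2 V)) = {g} := by simp
      rw [heq] at hdom
      exact absurd hdom (hsing g (hRE hg))
    · exact h
  have key : ∀ g ∈ R, (¬ ∃ h ∈ P, SharesEndpoint g h) → ∀ e ∈ Ev, SharesEndpoint g e := by
    intro g hgR hnadj e heEv
    have hgE := hgR.1
    have hgv : v ∉ g := hgR.2
    have hge₁ : SharesEndpoint e₁ g := by
      by_contra hc
      exact hnadj ⟨g, hP₀P ⟨hgR, hc⟩, ⟨g.out.1, Sym2.out_fst_mem g, Sym2.out_fst_mem g⟩⟩
    have hu₁g : u₁ ∈ g := by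
      obtain ⟨w, hw₁, hwg⟩ := hge₁
      rw [he₁def, Sym2.mem_iff] at hw₁
      rcases hw₁ with rfl | rfl
      · exact absurd hwg hgv
      · exact hwg
    obtain ⟨x, hgx⟩ : ∃ x, g = s(u₁, x) := Sym2.mem_iff_exists.mp hu₁g
    have hadjux : G.Adj u₁ x := by rwa [hgx, SimpleGraph.mem_edgeSet] at hgE
    have hxv : x ≠ v := by
      rintro rfl
      exact hgv (by rw [hgx]; exact Sym2.mem_mk_right _ _)
    have hxu₁ : x ≠ u₁ := fun h => G.irrefl (h ▸ hadjux)
    have hxg : x ∈ g := by rw [hgx]; exact Sym2.mem_mk_right _ _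
    have hve : v ∈ e := heEv.2
    obtain ⟨y, hey⟩ : ∃ y, e = s(v, y) := Sym2.mem_iff_exists.mp hve
    have hadjvy : G.Adj v y := by
      have := heEv.1; rwa [hey, SimpleGraph.mem_edgeSet] at this
    by_contra hne
    have hyu₁ : y ≠ u₁ := by
      intro h
      exact hne ⟨u₁, hu₁g, by rw [hey, h]; exact Sym2.mem_mk_right _ _⟩
    have hyx : y ≠ x := by
      intro h
      exact hne ⟨x, hxg, by rw [hey, h]; exact Sym2.mem_mk_right _ _⟩
    have hu₁y : u₁ ≠ y := fun h => hyu₁ h.symm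
    have hsub2 : ({u₁, y} : Finset V) ⊆ G.neighborFinset v := by
      intro z hz
      rw [SimpleGraph.mem_neighborFinset]
      rcases Finset.mem_insert.mp hz with rfl | hz
      · exact hu₁
      · rw [Finset.mem_singleton] at hz; subst hz; exact hadjvy
    have hdegv2 : 2 ≤ G.degree v := by
      have := Finset.card_le_card hsub2
      rwa [Finset.card_pair hu₁y] at this
    have hdegle : ∀ w, G.degree v ≤ G.degree w := fun w => hv ▸ G.minDegree_le_degree w
    obtain ⟨z, hxz, hzv, hzu₁⟩ : ∃ z, G.Adj x z ∧ z ≠ v ∧ z ≠ u₁ := by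
      by_contra hc
      push_neg at hc
      by_cases hxadjv : G.Adj x v
      · have hsub3 : ({u₁, y, x} : Finset V) ⊆ G.neighborFinset v := by
          intro z hz
          rw [SimpleGraph.mem_neighborFinset]
          rcases Finset.mem_insert.mp hz with rfl | hz
          · exact hu₁
          · rcases Finset.mem_insert.mp hz with rfl | hz
            · exact hadjvy
            · rw [Finset.mem_singleton] at hz; subst hz; exact hxadjv.symm
        have hcard3 : ({u₁, y, x} : Finset V).card = 3 := by
          have h1 : u₁ ∉ ({y, x} : Finset V) := by simp [hu₁y, Ne.symm hxu₁]
          have h2 : y ∉ ({x} : Finset V) := by simp [hyx]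
          rw [Finset.card_insert_of_notMem h1, Finset.card_insert_of_notMem h2,
            Finset.card_singleton]
        have hdegv3 : 3 ≤ G.degree v := by
          have := Finset.card_le_card hsub3; rwa [hcard3] at this
        have hdegx3 : 3 ≤ G.degree x := le_trans hdegv3 (hdegle x)
        have hnsub : G.neighborFinset x ⊆ {v, u₁} := by
          intro z hz
          rw [SimpleGraph.mem_neighborFinset] at hz
          rcases eq_or_ne z v with rfl | hzv
          · exact Finset.mem_insert_self _ _
          · simp [hc z hz hzv]
        have hle : G.degree x ≤ 2 := by
          have h := Finset.card_le_card hnsub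
          calc G.degree x ≤ ({v, u₁} : Finset V).card := h
            _ ≤ 2 := (Finset.card_insert_le _ _).trans (by simp)
        omega
      · have hdegx2 : 2 ≤ G.degree x := le_trans hdegv2 (hdegle x)
        have hnsub : G.neighborFinset x ⊆ {u₁} := by
          intro z hz
          rw [SimpleGraph.mem_neighborFinset] at hz
          rcases eq_or_ne z v with rfl | hzv
          · exact absurd hz hxadjv
          · simp [hc z hz hzv]
        have hle : G.degree x ≤ 1 := by
          have h := Finset.card_le_card hnsub
          simpa using h
        omega
    have hhE : s(x, z) ∈ G.edgeSet := hxz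
    have hhP₀ : s(x, z) ∈ P₀ := by
      refine ⟨⟨hhE, ?_⟩, ?_⟩
      · rw [Sym2.mem_iff]
        push_neg
        exact ⟨Ne.symm hxv, Ne.symm hzv⟩
      · rintro ⟨w, hw₁, hw₂⟩
        rw [he₁def, Sym2.mem_iff] at hw₁
        rw [Sym2.mem_iff] at hw₂
        rcases hw₁ with rfl | rfl
        · rcases hw₂ with h | h
          · exact hxv h.symm
          · exact hzv h.symm
        · rcases hw₂ with h | h
          · exact hxu₁ h.symm
          · exact hzu₁ h.symm
    exact hnadj ⟨s(x, z), hP₀P hhP₀, ⟨x, hxg, Sym2.mem_mk_left _ _⟩⟩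
  -- {e} ∪ P dominates for any e ∈ Ev
  have hUnionDom : ∀ e ∈ Ev, IsEdgeDominating G ({e} ∪ P) := by
    intro e heEv
    constructor
    · exact Set.union_subset (by simp [heEv.1]) hPE
    · rintro f ⟨hfE, hfn⟩
      by_cases hvf : v ∈ f
      · exact ⟨e, Set.mem_union_left _ rfl, v, hvf, heEv.2⟩
      · have hfR : f ∈ R := ⟨hfE, hvf⟩
        by_cases hadjP : ∃ h ∈ P, SharesEndpoint f h
        · obtain ⟨h, hh, hsh⟩ := hadjP
          exact ⟨h, Set.mem_union_right _ hh, hsh⟩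
        · exact ⟨e, Set.mem_union_left _ rfl, key f hfR hadjP e heEv⟩
  have hdisjEvP : ∀ e ∈ Ev, Disjoint ({e} : Set (Sym2 V)) P := by
    intro e heEv
    rw [Set.disjoint_left]
    intro a ha haP
    rw [Set.mem_singleton_iff] at ha
    subst ha
    exact (hPR haP).2 heEv.2
  have hcoal_singP : ∀ e ∈ Ev, IsEdgeCoalition G {e} P := fun e heEv =>
    ⟨hdisjEvP e heEv, hsing e heEv.1, hPnd, hUnionDom e heEv⟩
  have hcoal_Pe₁ : IsEdgeCoalition G P {e₁} :=
    ⟨(hdisjEvP e₁ he₁Ev).symm, hPnd, hsing e₁ he₁E, by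
      rw [Set.union_comm]; exact hUnionDom e₁ he₁Ev⟩
  have hcoal_gP : ∀ g ∈ R, g ∉ P → IsEdgeCoalition G {g} P := by
    intro g hg hgP
    refine ⟨?_, hsing g (hRE hg), hPnd, ?_⟩
    · rw [Set.disjoint_left]
      intro a ha haP
      rw [Set.mem_singleton_iff] at ha
      subst ha
      exact hgP haP
    · rw [Set.singleton_union]
      exact hins g hg hgP
  -- the partition
  set Part : Set (Set (Sym2 V)) :=
    (fun e => ({e} : Set (Sym2 V))) '' Ev ∪ {P} ∪ (fun g => ({g} : Set (Sym2 V))) '' (R \ P)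
    with hPartdef
  have hmemP : P ∈ Part := Or.inl (Or.inr rfl)
  have hmemE : ∀ e ∈ Ev, ({e} : Set (Sym2 V)) ∈ Part := fun e he => Or.inl (Or.inl ⟨e, he, rfl⟩)
  have hmemQ : ∀ g ∈ R, g ∉ P → ({g} : Set (Sym2 V)) ∈ Part :=
    fun g hg hgP => Or.inr ⟨g, ⟨hg, hgP⟩, rfl⟩
  have hPneqE : ∀ e ∈ Ev, P ≠ {e} := by
    intro e he h
    have : e ∈ P := by rw [h]; rfl
    exact (hPR this).2 he.2
  have hPart1 : ∀ A ∈ Part, A.Nonempty := by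
    rintro A hA
    rcases hA with (⟨e, _, rfl⟩ | rfl) | ⟨g, _, rfl⟩
    · exact Set.singleton_nonempty _
    · exact hPne
    · exact Set.singleton_nonempty _
  have hPart2 : Part.Pairwise Disjoint := by
    have hEvR : ∀ {c : Sym2 V}, c ∈ Ev → c ∈ R → False := fun hc hc' => hc'.2 hc.2
    intro A hA B hB hAB
    rw [Set.disjoint_left]
    intro c hcA hcB
    rcases hA with (⟨a, ha, rfl⟩ | rfl) | ⟨a, ha, rfl⟩ <;>
      rcases hB with (⟨b, hb, rfl⟩ | rfl) | ⟨b, hb, rfl⟩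
    · simp only [Set.mem_singleton_iff] at hcA hcB
      exact hAB (by rw [← hcA, ← hcB])
    · simp only [Set.mem_singleton_iff] at hcA
      exact hEvR (hcA ▸ ha) (hPR hcB)
    · simp only [Set.mem_singleton_iff] at hcA hcB
      exact hEvR (hcA ▸ ha) (hcB ▸ hb).1
    · simp only [Set.mem_singleton_iff] at hcB
      exact hEvR (hcB ▸ hb) (hPR hcA)
    · exact absurd rfl hAB
    · simp only [Set.mem_singleton_iff] at hcB
      exact (hcB ▸ hb).2 hcA
    · simp only [Set.mem_singleton_iff] at hcA hcB
      exact hEvR (hcB ▸ hb) (hcA ▸ ha).1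
    · simp only [Set.mem_singleton_iff] at hcA
      exact (hcA ▸ ha).2 hcB
    · simp only [Set.mem_singleton_iff] at hcA hcB
      exact hAB (by rw [← hcA, ← hcB])
  have hPart3 : ⋃₀ Part = G.edgeSet := by
    apply Set.Subset.antisymm
    · rintro f ⟨A, hA, hfA⟩
      rcases hA with (⟨e, he, rfl⟩ | rfl) | ⟨g, hg, rfl⟩
      · rw [Set.mem_singleton_iff] at hfA; exact hfA ▸ he.1
      · exact hPE hfA
      · rw [Set.mem_singleton_iff] at hfA; exact hfA ▸ (hRE hg.1)
    · intro f hf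
      by_cases hvf : v ∈ f
      · exact ⟨{f}, hmemE f ⟨hf, hvf⟩, rfl⟩
      · by_cases hfP : f ∈ P
        · exact ⟨P, hmemP, hfP⟩
        · exact ⟨{f}, hmemQ f ⟨hf, hvf⟩ hfP, rfl⟩
  have hPart4 : ∀ A ∈ Part, ((∃ e, A = {e}) ∧ IsEdgeDominating G A) ∨
      (¬ IsEdgeDominating G A ∧ ∃ B ∈ Part, B ≠ A ∧ IsEdgeCoalition G A B) := by
    intro A hA
    rcases hA with (⟨e, he, rfl⟩ | rfl) | ⟨g, hg, rfl⟩
    · exact Or.inr ⟨hsing e he.1, P, hmemP, hPneqE e he, hcoal_singP e he⟩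
    · refine Or.inr ⟨hPnd, {e₁}, hmemE e₁ he₁Ev, fun h => hPneqE e₁ he₁Ev h.symm, hcoal_Pe₁⟩
    · refine Or.inr ⟨hsing g (hRE hg.1), P, hmemP, ?_, hcoal_gP g hg.1 hg.2⟩
      intro h
      exact hg.2 (by rw [h]; exact rfl)
  have hECP : IsECPartition G Part := ⟨hPart1, hPart2, hPart3, hPart4⟩
  -- counting
  have hEvcard : Ev.ncard = G.degree v := by
    rw [hEvdef, Set.ncard_eq_toFinset_card', ← SimpleGraph.incidenceFinset,
      card_incidenceFinset_eq_degree]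
  have hcard : 1 + G.minDegree ≤ Part.ncard := by
    have hsub : insert P ((fun e => ({e} : Set (Sym2 V))) '' Ev) ⊆ Part := by
      intro A hA
      rcases Set.mem_insert_iff.mp hA with rfl | ⟨e, he, rfl⟩
      · exact hmemP
      · exact hmemE e he
    have hPnotmem : P ∉ (fun e => ({e} : Set (Sym2 V))) '' Ev := by
      rintro ⟨e, he, heq⟩
      exact hPneqE e he heq.symm
    have h1 : ((fun e => ({e} : Set (Sym2 V))) '' Ev).ncard = G.degree v := by
      rw [Set.ncard_image_of_injective _ Set.singleton_injective, hEvcard]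
    have h2 : (insert P ((fun e => ({e} : Set (Sym2 V))) '' Ev)).ncard = G.degree v + 1 := by
      rw [Set.ncard_insert_of_notMem hPnotmem (Set.toFinite _), h1]
    calc 1 + G.minDegree = G.degree v + 1 := by rw [hv]; omega
      _ = (insert P ((fun e => ({e} : Set (Sym2 V))) '' Ev)).ncard := h2.symm
      _ ≤ Part.ncard := Set.ncard_le_ncard hsub (Set.toFinite _)
  -- bounded above
  have hbdd : BddAbove {k | ∃ Q, IsECPartition G Q ∧ Q.ncard = k} := by
    refine ⟨(Set.univ : Set (Sym2 V)).ncard, ?_⟩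
    rintro k ⟨Q, hQ, rfl⟩
    have hne : Nonempty (Sym2 V) := ⟨s(v, v)⟩
    refine Set.ncard_le_ncard_of_injOn
      (fun A => if h : A.Nonempty then h.some else Classical.arbitrary _)
      (fun a _ => Set.mem_univ _) ?_ (Set.toFinite _)
    intro A hA B hB hfeq
    have hAne := hQ.1 A hA
    have hBne := hQ.1 B hB
    have hfeq' : (if h : A.Nonempty then h.some else Classical.arbitrary _) =
        (if h : B.Nonempty then h.some else Classical.arbitrary _) := hfeq
    rw [dif_pos hAne, dif_pos hBne] at hfeq'
    by_contra hne'
    have hd := hQ.2.1 hA hB hne'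
    exact Set.disjoint_left.mp hd hAne.some_mem (hfeq' ▸ hBne.some_mem)
  calc 1 + G.minDegree ≤ Part.ncard := hcard
    _ ≤ edgeCoalitionNumber G := le_csSup hbdd ⟨Part, hECP, rfl⟩
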